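/- (Newton–MacLaurin inequality, quotient form) Let λ ∈ Γ_k and suppose 0 ≤ s ≤ l ≤ k ≤ n, 0 ≤ s < r ≤ k, l ≥ s, k ≥ r, r > s. Then [ (σ_k(λ)/C(n,k)) / (σ_l(λ)/C(n,l)) ]^{1/(k-l)} ≤ [ (σ_r(λ)/C(n,r)) / (σ_s(λ)/C(n,s)) ]^{1/(r-s)}, where C(n,j) is the binomial coefficient. -/

import Mathlib

open Finset

/-- The k-th elementary symmetric function of x = (x_1,...,x_n). -/
noncomputable def esymm (n k : ℕ) (x : Fin n → ℝ) : ℝ :=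
  ∑ s ∈ (Finset.univ : Finset (Fin n)).powersetCard k, ∏ i ∈ s, x i

/-- σ_k(x | i): the k-th elementary symmetric function of x with the i-th entry deleted. -/
noncomputable def esymmDel (n k : ℕ) (x : Fin n → ℝ) (i : Fin n) : ℝ :=
  ∑ s ∈ ((Finset.univ : Finset (Fin n)).erase i).powersetCard k, ∏ j ∈ s, x j

/-- The Garding cone Γ_k = {x : σ_j(x) > 0 for all 1 ≤ j ≤ k}. -/
def gardingCone (n k : ℕ) : Set (Fin n → ℝ) :=
  {x | ∀ j : ℕ, 1 ≤ j → j ≤ k → 0 < esymm n j x}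

/-- σ_k for integer index, with the convention σ_k = 0 for k < 0. -/
noncomputable def esymmZ (n : ℕ) (k : ℤ) (x : Fin n → ℝ) : ℝ :=
  if k < 0 then 0 else esymm n k.toNat x

/-- σ_k(x|i) for integer index, with the convention σ_k = 0 for k < 0. -/
noncomputable def esymmDelZ (n : ℕ) (k : ℤ) (x : Fin n → ℝ) (i : Fin n) : ℝ :=
  if k < 0 then 0 else esymmDel n k.toNat x i

open Polynomial

-- quadratic nonnegativity
lemma quad_nonneg' {A B C₀ : ℝ} (hA : 0 ≤ A) (hC : 0 ≤ C₀) (hD : B^2 ≤ 4*A*C₀) (t : ℝ) :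
    0 ≤ A*t^2 + B*t + C₀ := by
  rcases hA.eq_or_lt.imp Eq.symm id with h | h
  · have hB : B = 0 := by nlinarith [sq_nonneg B]
    rw [h, hB]
    simpa using hC
  · nlinarith [sq_nonneg (2*A*t + B)]

lemma esymm_cons' (a : ℝ) (s : Multiset ℝ) (k : ℕ) :
    (a ::ₘ s).esymm (k+1) = s.esymm (k+1) + a * s.esymm k := by
  simp only [Multiset.esymm, Multiset.powersetCard_cons, Multiset.map_add, Multiset.sum_add,
    Multiset.map_map]
  congr 1
  rw [← Multiset.sum_map_mul_left]
  apply congrArg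
  apply Multiset.map_congr rfl
  intro t _
  simp [Multiset.prod_cons]

lemma esymm_card' (s : Multiset ℝ) : s.esymm (Multiset.card s) = s.prod := by
  have h : s.powersetCard (Multiset.card s) = {s} := by
    have hc : Multiset.card (s.powersetCard (Multiset.card s)) = 1 := by
      simp [Nat.choose_self]
    obtain ⟨t, ht⟩ := Multiset.card_eq_one.mp hc
    have hm : s ∈ s.powersetCard (Multiset.card s) := by
      simp [Multiset.mem_powersetCard]
    rw [ht] at hm ⊢
    simp at hm; rw [hm]
  simp [Multiset.esymm, h]

lemma esymm_zero' (s : Multiset ℝ) : s.esymm 0 = 1 := by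
  simp [Multiset.esymm]

lemma esymm_big' (s : Multiset ℝ) {k : ℕ} (h : Multiset.card s < k) : s.esymm k = 0 := by
  simp [Multiset.esymm, Multiset.powersetCard_eq_empty _ h]

lemma two_mul_choose_two (n : ℕ) : 2 * n.choose 2 = n * (n - 1) := by
  induction n with
  | zero => rfl
  | succ n ih =>
    rw [Nat.choose_succ_succ, Nat.choose_one_right, Nat.succ_sub_one, Nat.mul_add, ih]
    cases n with
    | zero => rfl
    | succ m =>
      simp only [Nat.succ_sub_one]
      zify
      ring

lemma newton_top : ∀ (m : ℕ) (s : Multiset ℝ), Multiset.card s = m + 2 →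
    ((m+2 : ℕ) : ℝ)^2 * (s.esymm m * s.esymm (m+2)) ≤
      (((m+2).choose 2 : ℕ) : ℝ) * s.esymm (m+1)^2 := by
  intro m
  induction m with
  | zero =>
    intro s hs
    obtain ⟨a, b, rfl⟩ := Multiset.card_eq_two.mp hs
    have h1 : ({a, b} : Multiset ℝ).esymm 1 = a + b := by
      have : ({a, b} : Multiset ℝ) = a ::ₘ b ::ₘ 0 := rfl
      rw [this, show (1 : ℕ) = 0 + 1 from rfl, esymm_cons', esymm_cons']
      simp [esymm_zero', Multiset.esymm]
      rw [Multiset.powersetCard_eq_empty (s := (0 : Multiset ℝ)) (n := 1) (by simp)]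
      simp
      ring
    have h2 : ({a, b} : Multiset ℝ).esymm 2 = a * b := by
      have hc : Multiset.card ({a, b} : Multiset ℝ) = 2 := hs
      rw [show (2:ℕ) = Multiset.card ({a, b} : Multiset ℝ) from hc.symm, esymm_card']
      simp
    rw [h1, h2, esymm_zero']
    norm_num
    nlinarith [sq_nonneg (a - b)]
  | succ m IH =>
    intro s hs
    have hne : s ≠ 0 := by
      intro h; rw [h] at hs; simp at hs
    obtain ⟨a, ha⟩ := Multiset.exists_mem_of_ne_zero hne
    obtain ⟨s', rfl⟩ := Multiset.exists_cons_of_mem ha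
    have hcard : Multiset.card s' = m + 2 := by
      rw [Multiset.card_cons] at hs; omega
    set F0 := s'.esymm m with hF0
    set F1 := s'.esymm (m+1) with hF1
    set F2 := s'.esymm (m+2) with hF2
    have e1 : (a ::ₘ s').esymm (m+1) = F1 + a * F0 := esymm_cons' a s' m
    have e2 : (a ::ₘ s').esymm (m+2) = F2 + a * F1 := esymm_cons' a s' (m+1)
    have e3 : (a ::ₘ s').esymm (m+3) = a * F2 := by
      rw [esymm_cons' a s' (m+2), esymm_big' s' (by omega : Multiset.card s' < m + 3)]
      ring
    have hIH := IH s' hcard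
    rw [← hF0, ← hF1, ← hF2] at hIH
    clear_value F0 F1 F2
    -- real constants
    set c2 := (((m+2).choose 2 : ℕ) : ℝ) with hc2
    set c2' := (((m+3).choose 2 : ℕ) : ℝ) with hc2'
    have hrel1 : 2 * c2 = ((m:ℝ)+2) * ((m:ℝ)+1) := by
      rw [hc2]
      have h : 2 * (m+2).choose 2 = (m+2) * (m+1) := by simpa using two_mul_choose_two (m+2)
      exact_mod_cast congrArg (Nat.cast : ℕ → ℝ) h
    have hrel2 : 2 * c2' = ((m:ℝ)+3) * ((m:ℝ)+2) := by
      rw [hc2']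
      have h : 2 * (m+3).choose 2 = (m+3) * (m+2) := by simpa using two_mul_choose_two (m+3)
      exact_mod_cast congrArg (Nat.cast : ℕ → ℝ) h
    clear_value c2 c2'
    have hIH' : ((m:ℝ)+2)^2 * (F0 * F2) ≤ c2 * F1^2 := by
      push_cast at hIH; convert hIH using 2 <;> push_cast <;> ring
    set D := c2 * F1^2 - ((m:ℝ)+2)^2 * (F0 * F2) with hD
    clear_value D
    have hDpos : 0 ≤ D := by rw [hD]; linarith
    set A := c2' * F1^2 - ((m:ℝ)+3)^2 * (F0 * F2) with hA
    set B := 2*c2'*F1*F2 - ((m:ℝ)+3)^2 * (F1 * F2) with hB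
    set C₀ := c2' * F2^2 with hC₀
    clear_value A B C₀
    have keyA : ((m:ℝ)+2)^2 * (2 * A) = 2*((m:ℝ)+3)^2 * D + ((m:ℝ)+2)*((m:ℝ)+3) * F1^2 := by
      rw [hA, hD]
      linear_combination (-((m:ℝ)+3)^2*F1^2) * hrel1 + (((m:ℝ)+2)^2*F1^2) * hrel2
    have hApos : 0 ≤ A := by
      have hm2 : (0:ℝ) < ((m:ℝ)+2)^2 := by positivity
      have h0 : 0 ≤ ((m:ℝ)+2)^2 * (2*A) := by
        rw [keyA]
        have h1 : 0 ≤ 2*((m:ℝ)+3)^2 * D := by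
          apply mul_nonneg (by positivity) hDpos
        have h2 : 0 ≤ ((m:ℝ)+2)*((m:ℝ)+3) * F1^2 := by positivity
        linarith
      have := (mul_nonneg_iff_of_pos_left hm2).mp h0
      linarith
    have keyDisc : ((m:ℝ)+2)^2 * (4*A*C₀ - B^2) = 4*c2'*((m:ℝ)+3)^2 * (F2^2 * D) := by
      rw [hA, hB, hC₀, hD]
      linear_combination (F1^2*F2^2*(-2*((m:ℝ)+3)^2*c2')) * hrel1 +
        (F1^2*F2^2*(((m:ℝ)+2)*((m:ℝ)+3)^3)) * hrel2
    have hC0pos : 0 ≤ C₀ := by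
      rw [hC₀]
      have : (0:ℝ) ≤ c2' := by rw [hc2']; positivity
      positivity
    have hdisc : B^2 ≤ 4*A*C₀ := by
      have hc2'nn : (0:ℝ) ≤ c2' := by rw [hc2']; positivity
      have hrhs : 0 ≤ 4*c2'*((m:ℝ)+3)^2 * (F2^2 * D) := by
        apply mul_nonneg
        · apply mul_nonneg (by linarith) (sq_nonneg _)
        · exact mul_nonneg (sq_nonneg _) hDpos
      have hm2 : (0:ℝ) < ((m:ℝ)+2)^2 := by positivity
      have h0 : 0 ≤ ((m:ℝ)+2)^2 * (4*A*C₀ - B^2) := by rw [keyDisc]; exact hrhs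
      have := (mul_nonneg_iff_of_pos_left hm2).mp h0
      linarith
    have Q := quad_nonneg' hApos hC0pos hdisc a
    rw [show m + 1 + 2 = m + 3 from rfl, e1, e2, e3]
    rw [hA, hB, hC₀] at Q
    push_cast
    nlinarith [Q]

lemma exists_der (s : Multiset ℝ) (hn : 1 ≤ Multiset.card s) :
    ∃ t : Multiset ℝ, Multiset.card t = Multiset.card s - 1 ∧
      ∀ i ≤ Multiset.card s - 1,
        (Multiset.card s : ℝ) * t.esymm i = ((Multiset.card s : ℝ) - i) * s.esymm i := by
  classical
  set n := Multiset.card s with hns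
  set p : ℝ[X] := (s.map fun a => X - C a).prod with hp
  have hmonic : p.Monic := by
    apply monic_multiset_prod_of_monic
    intro a _
    exact monic_X_sub_C a
  have hdeg : p.natDegree = n := by
    rw [hp, natDegree_multiset_prod_X_sub_C_eq_card]
  have hroots : p.roots = s := roots_multiset_prod_X_sub_C s
  set q : ℝ[X] := derivative p with hq
  have hqdegle : q.natDegree ≤ n - 1 := by
    rw [hq]
    exact (natDegree_derivative_le p).trans (by omega)
  have hqroots_ge : n - 1 ≤ Multiset.card q.roots := by
    have h := Polynomial.card_roots_le_derivative p
    rw [hroots, ← hq] at h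
    omega
  have hqcard : Multiset.card q.roots = q.natDegree := by
    have h1 := Polynomial.card_roots' q
    omega
  have hqdeg : q.natDegree = n - 1 := by
    have h1 := Polynomial.card_roots' q
    omega
  -- leading coefficient of q is n
  have hlead : q.leadingCoeff = (n : ℝ) := by
    rw [Polynomial.leadingCoeff, hqdeg, hq, Polynomial.coeff_derivative]
    have : n - 1 + 1 = n := by omega
    rw [this, ← hdeg, hmonic.coeff_natDegree]
    have h1 : 1 ≤ p.natDegree := by omega
    push_cast [Nat.cast_sub h1]
    ring
  refine ⟨q.roots, by omega, ?_⟩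
  intro i hi
  -- coefficient computations
  have hkle : n - 1 - i ≤ q.natDegree := by omega
  have hq1 : q.coeff (n - 1 - i) =
      (n : ℝ) * (-1)^i * q.roots.esymm i := by
    rw [Polynomial.coeff_eq_esymm_roots_of_card hqcard hkle, hlead, hqdeg]
    have : n - 1 - (n - 1 - i) = i := by omega
    rw [this]
  have hq2 : q.coeff (n - 1 - i) = p.coeff (n - 1 - i + 1) * (n - 1 - i + 1 : ℕ) := by
    rw [hq, Polynomial.coeff_derivative]
    push_cast
    ring
  have hp1 : p.coeff (n - 1 - i + 1) = (-1)^i * s.esymm i := by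
    have hle : n - 1 - i + 1 ≤ Multiset.card s := by omega
    rw [hp, Multiset.prod_X_sub_C_coeff s hle]
    have : Multiset.card s - (n - 1 - i + 1) = i := by omega
    rw [this]
  have hcast : ((n - 1 - i + 1 : ℕ) : ℝ) = (n : ℝ) - i := by
    have : n - 1 - i + 1 = n - i := by omega
    rw [this, Nat.cast_sub (by omega)]
  have hne : ((-1 : ℝ))^i ≠ 0 := by
    apply pow_ne_zero; norm_num
  have key : (n:ℝ) * (-1)^i * q.roots.esymm i = (-1)^i * s.esymm i * ((n:ℝ) - i) := by
    rw [← hq1, hq2, hp1, hcast]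
  apply mul_right_cancel₀ hne
  linear_combination key

lemma newton_norm : ∀ (n : ℕ) (s : Multiset ℝ), Multiset.card s = n → ∀ j : ℕ, j + 2 ≤ n →
    s.esymm j / ((n.choose j : ℕ) : ℝ) * (s.esymm (j+2) / ((n.choose (j+2) : ℕ) : ℝ)) ≤
      (s.esymm (j+1) / ((n.choose (j+1) : ℕ) : ℝ))^2 := by
  intro n
  induction n with
  | zero => intro s hs j hj; omega
  | succ n IH =>
    intro s hs j hj
    rcases eq_or_lt_of_le hj with heq | hlt
    · -- top case : j + 2 = n + 1
      have hm : n + 1 = j + 2 := heq.symm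
      have htop := newton_top j s (by omega)
      have h1 : (n+1).choose (j+2) = 1 := by rw [hm]; exact Nat.choose_self _
      have h2 : (n+1).choose (j+1) = j + 2 := by
        rw [hm, Nat.choose_succ_self_right]
      have h3 : (n+1).choose j = (j+2).choose 2 := by
        rw [hm]
        have h := Nat.choose_symm (show 2 ≤ j+2 by omega)
        simpa using h
      rw [h1, h2, h3]
      have hposc : (0:ℝ) < (((j+2).choose 2 : ℕ) : ℝ) := by
        have : 0 < (j+2).choose 2 := Nat.choose_pos (by omega)
        exact_mod_cast this
      have hposj : (0:ℝ) < ((j+2 : ℕ) : ℝ) := by positivity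
      rw [div_pow, div_mul_div_comm, div_le_div_iff₀ (by positivity) (by positivity)]
      push_cast
      push_cast at htop
      nlinarith [htop]
    · -- inductive case : j + 2 ≤ n
      have hjn : j + 2 ≤ n := by omega
      obtain ⟨t, hct, hrel⟩ := exists_der s (by omega)
      rw [hs] at hrel hct
      simp only [Nat.add_sub_cancel] at hrel hct
      have hne : ((n:ℝ) + 1) ≠ 0 := by positivity
      have nesymm_eq : ∀ i ≤ n, s.esymm i / (((n+1).choose i : ℕ) : ℝ) =
          t.esymm i / ((n.choose i : ℕ) : ℝ) := by
        intro i hile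
        have hchoose : (n.choose i) * (n + 1) = ((n+1).choose i) * (n + 1 - i) :=
          Nat.choose_mul_succ_eq n i
        have hc1 : (0:ℝ) < (((n+1).choose i : ℕ) : ℝ) := by
          exact_mod_cast Nat.choose_pos (by omega : i ≤ n + 1)
        have hc2 : (0:ℝ) < ((n.choose i : ℕ) : ℝ) := by
          exact_mod_cast Nat.choose_pos hile
        rw [div_eq_div_iff (ne_of_gt hc1) (ne_of_gt hc2)]
        have hH := hrel i hile
        push_cast at hH
        have hchoose' : ((n.choose i : ℕ) : ℝ) * ((n:ℝ) + 1) =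
            (((n+1).choose i : ℕ) : ℝ) * ((n:ℝ) + 1 - i) := by
          have := congrArg (Nat.cast : ℕ → ℝ) hchoose
          push_cast [Nat.cast_sub (by omega : i ≤ n + 1)] at this
          linarith [this]
        apply mul_left_cancel₀ hne
        calc ((n:ℝ)+1) * (s.esymm i * ((n.choose i : ℕ) : ℝ))
            = s.esymm i * (((n.choose i : ℕ) : ℝ) * ((n:ℝ) + 1)) := by ring
          _ = s.esymm i * ((((n+1).choose i : ℕ) : ℝ) * ((n:ℝ) + 1 - i)) := by rw [hchoose']
          _ = (((n:ℝ) + 1 - i) * s.esymm i) * (((n+1).choose i : ℕ) : ℝ) := by ring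
          _ = (((n:ℝ) + 1) * t.esymm i) * (((n+1).choose i : ℕ) : ℝ) := by rw [← hH]
          _ = ((n:ℝ)+1) * (t.esymm i * (((n+1).choose i : ℕ) : ℝ)) := by ring
      rw [nesymm_eq j (by omega), nesymm_eq (j+1) (by omega), nesymm_eq (j+2) (by omega)]
      exact IH t hct j hjn

lemma rpow_of_pow_le {a b : ℝ} (ha : 0 < a) (hb : 0 < b) {m q : ℕ} (hm : 0 < m) (hq : 0 < q)
    (h : a ^ q ≤ b ^ m) : a ^ ((1:ℝ)/(m:ℝ)) ≤ b ^ ((1:ℝ)/(q:ℝ)) := by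
  have hmR : (0:ℝ) < (m:ℝ) := by exact_mod_cast hm
  have hqR : (0:ℝ) < (q:ℝ) := by exact_mod_cast hq
  have e1 : a ^ ((1:ℝ)/(m:ℝ)) = (a ^ (q:ℕ)) ^ ((1:ℝ)/((m:ℝ)*(q:ℝ))) := by
    rw [← Real.rpow_natCast a q, ← Real.rpow_mul ha.le]
    congr 1
    field_simp
  have e2 : b ^ ((1:ℝ)/(q:ℝ)) = (b ^ (m:ℕ)) ^ ((1:ℝ)/((m:ℝ)*(q:ℝ))) := by
    rw [← Real.rpow_natCast b m, ← Real.rpow_mul hb.le]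
    congr 1
    field_simp
  rw [e1, e2]
  exact Real.rpow_le_rpow (by positivity) h (by positivity)

lemma maclaurin_ratio (K : ℕ) (P : ℕ → ℝ) (hpos : ∀ i ≤ K, 0 < P i)
    (hnewt : ∀ j, j + 2 ≤ K → P j * P (j+2) ≤ P (j+1)^2)
    {s l r k : ℕ} (hsl : s ≤ l) (hlk : l < k) (hsr : s < r) (hrk : r ≤ k) (hkK : k ≤ K) :
    (P k / P l) ^ ((1:ℝ)/(((k - l : ℕ)):ℝ)) ≤ (P r / P s) ^ ((1:ℝ)/(((r - s : ℕ)):ℝ)) := by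
  set ρ : ℕ → ℝ := fun j => P (j+1) / P j with hρ
  have hρpos : ∀ j, j + 1 ≤ K → 0 < ρ j := by
    intro j hj
    exact div_pos (hpos _ hj) (hpos _ (by omega))
  have hanti : ∀ a b : ℕ, a ≤ b → b + 1 ≤ K → ρ b ≤ ρ a := by
    intro a b hab
    induction b, hab using Nat.le_induction with
    | base => intro _; exact le_refl _
    | succ b hab ih =>
      intro hb
      have step : ρ (b+1) ≤ ρ b := by
        rw [hρ]
        rw [div_le_div_iff₀ (hpos _ (by omega)) (hpos _ (by omega))]
        have := hnewt b (by omega)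
        nlinarith [this]
      exact step.trans (ih (by omega))
  have htele : ∀ u v : ℕ, u ≤ v → v ≤ K → (∏ j ∈ Finset.Ico u v, ρ j) = P v / P u := by
    intro u v huv
    induction v, huv using Nat.le_induction with
    | base =>
      intro hu
      simp [div_self (ne_of_gt (hpos u hu))]
    | succ v huv ih =>
      intro hv
      rw [Finset.prod_Ico_succ_top huv, ih (by omega), hρ]
      have h1 : P v ≠ 0 := ne_of_gt (hpos v (by omega))
      have h2 : P u ≠ 0 := ne_of_gt (hpos u (by omega))
      field_simp
  -- the three products
  have hApos : 0 < P k / P l := div_pos (hpos k hkK) (hpos l (by omega))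
  have hMpos : 0 < P k / P s := div_pos (hpos k hkK) (hpos s (by omega))
  have hBpos : 0 < P r / P s := div_pos (hpos r (by omega)) (hpos s (by omega))
  have hconst_le : ∀ (u v w : ℕ), u ≤ v → v ≤ w → w ≤ K →
      (∏ j ∈ Finset.Ico u v, ρ j) ≤ ρ u ^ (v - u) ∧
      ρ (v-1) ^ (v - u) ≤ (∏ j ∈ Finset.Ico u v, ρ j) := by
    intro u v w huv hvw hwK
    constructor
    · calc (∏ j ∈ Finset.Ico u v, ρ j) ≤ ∏ _j ∈ Finset.Ico u v, ρ u := by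
            apply Finset.prod_le_prod
            · intro j hj
              exact (hρpos j (by simp [Finset.mem_Ico] at hj; omega)).le
            · intro j hj
              simp [Finset.mem_Ico] at hj
              exact hanti u j hj.1 (by omega)
      _ = ρ u ^ (v - u) := by rw [Finset.prod_const, Nat.card_Ico]
    · calc ρ (v-1) ^ (v - u) = ∏ _j ∈ Finset.Ico u v, ρ (v-1) := by
            rw [Finset.prod_const, Nat.card_Ico]
      _ ≤ ∏ j ∈ Finset.Ico u v, ρ j := by
            apply Finset.prod_le_prod
            · intro j hj
              rcases Nat.eq_zero_or_pos (v - u) with h0 | h0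
              · simp [Finset.mem_Ico] at hj; omega
              · exact (hρpos (v-1) (by omega)).le
            · intro j hj
              simp [Finset.mem_Ico] at hj
              exact hanti j (v-1) (by omega) (by omega)
  have h1 : (P k / P l) ^ (k - s) ≤ (P k / P s) ^ (k - l) := by
    have hsplit : (∏ j ∈ Finset.Ico s l, ρ j) * (∏ j ∈ Finset.Ico l k, ρ j)
        = ∏ j ∈ Finset.Ico s k, ρ j := Finset.prod_Ico_consecutive ρ hsl hlk.le
    have hA := htele l k hlk.le hkK
    have hM := htele s k (by omega) hkK
    have hc := htele s l hsl (by omega)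
    rw [← hA, ← hM]
    have hcpos : 0 < ∏ j ∈ Finset.Ico s l, ρ j := by rw [hc]; exact div_pos (hpos l (by omega)) (hpos s (by omega))
    have hApos' : 0 < ∏ j ∈ Finset.Ico l k, ρ j := by rw [hA]; exact hApos
    obtain ⟨hup, _⟩ := hconst_le l k k hlk.le le_rfl hkK
    obtain ⟨_, hdown⟩ := hconst_le s l l hsl le_rfl (by omega)
    have hρl : ρ (l+1-1) = ρ l := by norm_num
    have hdown' : ρ l ^ (l - s) ≤ ∏ j ∈ Finset.Ico s l, ρ j := by
      rcases Nat.eq_zero_or_pos (l - s) with h0 | h0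
      · have : Finset.Ico s l = ∅ := by
          apply Finset.Ico_eq_empty; omega
        rw [this, h0]; simp
      · have hl1 : l - 1 + 1 = l := by omega
        calc ρ l ^ (l - s) = ρ ((l-1)+1) ^ (l - s) := by rw [hl1]
          _ ≤ ρ (l-1) ^ (l-s) := by
              apply pow_le_pow_left₀ (hρpos _ (by omega)).le
              exact hanti (l-1) ((l-1)+1) (by omega) (by omega)
          _ ≤ ∏ j ∈ Finset.Ico s l, ρ j := by rw [← hl1] at hdown ⊢; exact hdown
    have hρlpos : 0 < ρ l := hρpos l (by omega)
    have key : (∏ j ∈ Finset.Ico l k, ρ j) ^ (l - s) ≤ (∏ j ∈ Finset.Ico s l, ρ j) ^ (k - l) := by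
      calc (∏ j ∈ Finset.Ico l k, ρ j) ^ (l - s) ≤ (ρ l ^ (k - l)) ^ (l - s) := by
            exact pow_le_pow_left₀ hApos'.le hup _
        _ = (ρ l ^ (l - s)) ^ (k - l) := by rw [← pow_mul, ← pow_mul, Nat.mul_comm]
        _ ≤ (∏ j ∈ Finset.Ico s l, ρ j) ^ (k - l) := by
            exact pow_le_pow_left₀ (by positivity) hdown' _
    calc (∏ j ∈ Finset.Ico l k, ρ j) ^ (k - s)
        = (∏ j ∈ Finset.Ico l k, ρ j) ^ (k - l) * (∏ j ∈ Finset.Ico l k, ρ j) ^ (l - s) := by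
          rw [← pow_add]; congr 1; omega
      _ ≤ (∏ j ∈ Finset.Ico l k, ρ j) ^ (k - l) * (∏ j ∈ Finset.Ico s l, ρ j) ^ (k - l) := by
          apply mul_le_mul_of_nonneg_left key (by positivity)
      _ = ((∏ j ∈ Finset.Ico s l, ρ j) * (∏ j ∈ Finset.Ico l k, ρ j)) ^ (k - l) := by
          rw [mul_pow]; ring
      _ = (∏ j ∈ Finset.Ico s k, ρ j) ^ (k - l) := by rw [hsplit]
  have h2 : (P k / P s) ^ (r - s) ≤ (P r / P s) ^ (k - s) := by
    have hsplit : (∏ j ∈ Finset.Ico s r, ρ j) * (∏ j ∈ Finset.Ico r k, ρ j)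
        = ∏ j ∈ Finset.Ico s k, ρ j := Finset.prod_Ico_consecutive ρ (by omega) hrk
    have hM := htele s k (by omega) hkK
    have hB := htele s r (by omega) (by omega)
    have hd := htele r k hrk hkK
    rw [← hM, ← hB]
    have hBpos' : 0 < ∏ j ∈ Finset.Ico s r, ρ j := by
      rw [hB]; exact hBpos
    have hdpos : 0 < ∏ j ∈ Finset.Ico r k, ρ j := by
      rw [hd]; exact div_pos (hpos k hkK) (hpos r (by omega))
    have hr1 : r - 1 + 1 = r := by omega
    have hup : (∏ j ∈ Finset.Ico r k, ρ j) ≤ ρ (r-1) ^ (k - r) := by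
      calc (∏ j ∈ Finset.Ico r k, ρ j) ≤ ∏ _j ∈ Finset.Ico r k, ρ (r-1) := by
            apply Finset.prod_le_prod
            · intro j hj
              simp [Finset.mem_Ico] at hj
              exact (hρpos j (by omega)).le
            · intro j hj
              simp [Finset.mem_Ico] at hj
              exact hanti (r-1) j (by omega) (by omega)
        _ = ρ (r-1) ^ (k - r) := by rw [Finset.prod_const, Nat.card_Ico]
    obtain ⟨_, hdown⟩ := hconst_le s r r (by omega) le_rfl (by omega)
    have hρpos' : 0 < ρ (r-1) := hρpos (r-1) (by omega)
    have key : (∏ j ∈ Finset.Ico r k, ρ j) ^ (r - s) ≤ (∏ j ∈ Finset.Ico s r, ρ j) ^ (k - r) := by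
      calc (∏ j ∈ Finset.Ico r k, ρ j) ^ (r - s) ≤ (ρ (r-1) ^ (k - r)) ^ (r - s) := by
            exact pow_le_pow_left₀ hdpos.le hup _
        _ = (ρ (r-1) ^ (r - s)) ^ (k - r) := by rw [← pow_mul, ← pow_mul, Nat.mul_comm]
        _ ≤ (∏ j ∈ Finset.Ico s r, ρ j) ^ (k - r) := by
            exact pow_le_pow_left₀ (by positivity) hdown _
    calc (∏ j ∈ Finset.Ico s k, ρ j) ^ (r - s)
        = ((∏ j ∈ Finset.Ico s r, ρ j) * (∏ j ∈ Finset.Ico r k, ρ j)) ^ (r - s) := by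
          rw [hsplit]
      _ = (∏ j ∈ Finset.Ico s r, ρ j) ^ (r - s) * (∏ j ∈ Finset.Ico r k, ρ j) ^ (r - s) := by
          rw [mul_pow]
      _ ≤ (∏ j ∈ Finset.Ico s r, ρ j) ^ (r - s) * (∏ j ∈ Finset.Ico s r, ρ j) ^ (k - r) := by
          apply mul_le_mul_of_nonneg_left key (by positivity)
      _ = (∏ j ∈ Finset.Ico s r, ρ j) ^ (k - s) := by
          rw [← pow_add]; congr 1; omega
  have g1 := rpow_of_pow_le hApos hMpos (show 0 < k - l by omega) (show 0 < k - s by omega) h1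
  have g2 := rpow_of_pow_le hMpos hBpos (show 0 < k - s by omega) (show 0 < r - s by omega) h2
  exact g1.trans g2

lemma esymm_eq_multiset (n k : ℕ) (x : Fin n → ℝ) :
    esymm n k x = (Multiset.map x Finset.univ.val).esymm k := by
  rw [Finset.esymm_map_val]
  rfl

lemma esymm_zero_fin (n : ℕ) (x : Fin n → ℝ) : esymm n 0 x = 1 := by
  simp [esymm]

/-- Newton–MacLaurin inequality, quotient form: for λ ∈ Γ_k and
0 ≤ s ≤ l ≤ k ≤ n, 0 ≤ s < r ≤ k, l < k,
[(σ_k/C(n,k))/(σ_l/C(n,l))]^{1/(k-l)} ≤ [(σ_r/C(n,r))/(σ_s/C(n,s))]^{1/(r-s)}. -/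
theorem newton_maclaurin_quotient (n k l r s : ℕ)
    (hsl : s ≤ l) (hlk : l < k) (hkn : k ≤ n) (hsr : s < r) (hrk : r ≤ k)
    (x : Fin n → ℝ) (hx : x ∈ gardingCone n k) :
    ((esymm n k x / (n.choose k : ℝ)) / (esymm n l x / (n.choose l : ℝ))) ^
        ((1 : ℝ) / ((k : ℝ) - (l : ℝ))) ≤
      ((esymm n r x / (n.choose r : ℝ)) / (esymm n s x / (n.choose s : ℝ))) ^
        ((1 : ℝ) / ((r : ℝ) - (s : ℝ))) := by
  set P : ℕ → ℝ := fun i => esymm n i x / ((n.choose i : ℕ) : ℝ) with hP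
  have hpos : ∀ i ≤ k, 0 < P i := by
    intro i hik
    rcases Nat.eq_zero_or_pos i with h0 | h0
    · rw [hP]; simp only [h0]
      rw [esymm_zero_fin]
      simp
    · rw [hP]
      apply div_pos (hx i h0 hik)
      exact_mod_cast Nat.choose_pos (by omega : i ≤ n)
  have hcard : Multiset.card (Multiset.map x Finset.univ.val) = n := by simp
  have hnewt : ∀ j, j + 2 ≤ k → P j * P (j+2) ≤ P (j+1)^2 := by
    intro j hj
    have := newton_norm n (Multiset.map x Finset.univ.val) hcard j (by omega)
    rw [← esymm_eq_multiset, ← esymm_eq_multiset, ← esymm_eq_multiset] at this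
    exact this
  have e1 : ((k:ℝ) - (l:ℝ)) = ((k - l : ℕ) : ℝ) := by rw [Nat.cast_sub hlk.le]
  have e2 : ((r:ℝ) - (s:ℝ)) = ((r - s : ℕ) : ℝ) := by rw [Nat.cast_sub hsr.le]
  rw [e1, e2]
  exact maclaurin_ratio k P hpos hnewt hsl hlk hsr hrk le_rfl
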